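/- Let G ~ G_{n,p,d} be any d-dependent random graph distribution and let F be any set of m ≥ 1 unordered pairs of distinct vertices. Then the probability that every pair in F is a present edge is at most p^{⌈m/(d+1)⌉}. -/

import Mathlib

open MeasureTheory ProbabilityTheory Filter

abbrev EdgeIdx (n : ℕ) := {e : Sym2 (Fin n) // ¬ e.IsDiag}

structure DepRandomGraph (n : ℕ) (p : ℝ) (d : ℕ) where
  Ω : Type
  m : MeasurableSpace Ω
  μ : @MeasureTheory.Measure Ω m
  isProb : @MeasureTheory.IsProbabilityMeasure Ω m μ
  X : EdgeIdx n → Ω → Bool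
  meas : ∀ e, @Measurable Ω Bool m ⊤ (X e)
  probX : ∀ e, μ {ω | X e ω = true} = ENNReal.ofReal p
  D : SimpleGraph (EdgeIdx n)
  degBound : ∀ e, (D.neighborSet e).ncard ≤ d
  indep : ∀ e, @ProbabilityTheory.Indep Ω
      (MeasurableSpace.comap (X e) ⊤)
      (⨆ f ∈ {f : EdgeIdx n | f ≠ e ∧ ¬ D.Adj e f}, MeasurableSpace.comap (X f) ⊤)
      m μ

attribute [instance] DepRandomGraph.m DepRandomGraph.isProb

def DepRandomGraph.graph {n : ℕ} {p : ℝ} {d : ℕ} (G : DepRandomGraph n p d) (ω : G.Ω) :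
    SimpleGraph (Fin n) :=
  SimpleGraph.fromEdgeSet {e : Sym2 (Fin n) | ∃ h : ¬ e.IsDiag, G.X ⟨e, h⟩ ω = true}

noncomputable def DepRandomGraph.deg {n : ℕ} {p : ℝ} {d : ℕ} (G : DepRandomGraph n p d)
    (ω : G.Ω) (v : Fin n) : ℕ :=
  {u | (G.graph ω).Adj v u}.ncard

noncomputable def DepRandomGraph.eAB {n : ℕ} {p : ℝ} {d : ℕ} (G : DepRandomGraph n p d)
    (ω : G.Ω) (A B : Finset (Fin n)) : ℕ :=
  {q : Fin n × Fin n | q.1 ∈ A ∧ q.2 ∈ B ∧ (G.graph ω).Adj q.1 q.2}.ncard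

def ContainsCopy {n : ℕ} {α : Type*} (G' : SimpleGraph (Fin n)) (H : SimpleGraph α) : Prop :=
  ∃ f : α → Fin n, Function.Injective f ∧ ∀ u v, H.Adj u v → G'.Adj (f u) (f v)

/-- The number of vertices covered by a finite set of edges. -/
noncomputable def edgeVertCount {α : Type*} (Γ : Finset (Sym2 α)) : ℕ :=
  {v : α | ∃ e ∈ Γ, v ∈ e}.ncard

/-- The edge cover number of a finite set of edges: the minimum size of a subset `A ⊆ Γ`
such that every edge of `Γ` shares an endpoint with some edge of `A`. -/
noncomputable def coverNum {α : Type*} (Γ : Finset (Sym2 α)) : ℕ :=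
  sInf {k : ℕ | ∃ A ⊆ Γ, A.card = k ∧ ∀ e ∈ Γ, ∃ a ∈ A, ∃ v : α, v ∈ e ∧ v ∈ a}



lemma exists_indep_subset {V : Type*} [Fintype V] (D : SimpleGraph V) {d : ℕ}
    (hdeg : ∀ v, (D.neighborSet v).ncard ≤ d) (F : Finset V) :
    ∃ S ⊆ F, (∀ a ∈ S, ∀ b ∈ S, ¬ D.Adj a b) ∧ F.card ≤ (d + 1) * S.card := by
  classical
  induction F using Finset.strongInduction with
  | _ F ih =>
    rcases F.eq_empty_or_nonempty with rfl | ⟨e, he⟩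
    · exact ⟨∅, by simp⟩
    · set N := F.filter (fun f => D.Adj e f) with hN
      have hNcard : N.card ≤ d := by
        have hsub : (N : Set V) ⊆ D.neighborSet e := by
          intro f hf
          simp only [hN, Finset.coe_filter, Set.mem_setOf_eq] at hf
          exact hf.2
        calc N.card = (N : Set V).ncard := (Set.ncard_coe_finset N).symm
          _ ≤ (D.neighborSet e).ncard := Set.ncard_le_ncard hsub (Set.toFinite _)
          _ ≤ d := hdeg e
      set F' := F \ insert e N with hF'
      have hss : F' ⊂ F := by
        apply Finset.sdiff_ssubset
        · intro x hx
          rcases Finset.mem_insert.1 hx with rfl | hx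
          · exact he
          · exact Finset.mem_of_mem_filter x hx
        · exact ⟨e, Finset.mem_insert_self e N⟩
      obtain ⟨S', hS'F, hS'ind, hS'card⟩ := ih F' hss
      have heF' : e ∉ F' := by simp [hF']
      have heS' : e ∉ S' := fun h => heF' (hS'F h)
      refine ⟨insert e S', ?_, ?_, ?_⟩
      · intro x hx
        rcases Finset.mem_insert.1 hx with rfl | hx
        · exact he
        · exact (Finset.sdiff_subset (hS'F hx))
      · intro a ha b hb
        have hnadj : ∀ f ∈ S', ¬ D.Adj e f := by
          intro f hf hadj
          have hfF' : f ∈ F' := hS'F hf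
          have : f ∈ insert e N := by
            simp [hN, Finset.mem_insert, Finset.mem_filter]
            right
            exact ⟨Finset.sdiff_subset hfF', hadj⟩
          exact (Finset.mem_sdiff.1 hfF').2 this
        intro hadj
        rcases Finset.mem_insert.1 ha with rfl | ha'
        · rcases Finset.mem_insert.1 hb with rfl | hb'
          · exact D.loopless.irrefl _ hadj
          · exact hnadj b hb' hadj
        · rcases Finset.mem_insert.1 hb with rfl | hb'
          · exact hnadj a ha' hadj.symm
          · exact hS'ind a ha' b hb' hadj
      · have h1 : F ⊆ F' ∪ insert e N := by
          intro x hx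
          by_cases hx' : x ∈ insert e N
          · exact Finset.mem_union_right _ hx'
          · exact Finset.mem_union_left _ (Finset.mem_sdiff.2 ⟨hx, hx'⟩)
        have h2 : F.card ≤ F'.card + (d + 1) := by
          calc F.card ≤ (F' ∪ insert e N).card := Finset.card_le_card h1
            _ ≤ F'.card + (insert e N).card := Finset.card_union_le _ _
            _ ≤ F'.card + (N.card + 1) := by
                have := Finset.card_insert_le e N; omega
            _ ≤ F'.card + (d + 1) := by omega
        have h3 : (insert e S').card = S'.card + 1 := Finset.card_insert_of_notMem heS'
        calc F.card ≤ F'.card + (d + 1) := h2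
          _ ≤ (d + 1) * S'.card + (d + 1) := by omega
          _ = (d + 1) * (insert e S').card := by rw [h3]; ring

lemma meas_all_eq {n : ℕ} {p : ℝ} {d : ℕ} (G : DepRandomGraph n p d) (S : Finset (EdgeIdx n))
    (hind : ∀ a ∈ S, ∀ b ∈ S, ¬ G.D.Adj a b) :
    G.μ {ω | ∀ e ∈ S, G.X e ω = true} = (ENNReal.ofReal p) ^ S.card := by
  classical
  induction S using Finset.induction with
  | empty => simp
  | @insert e S he ih =>
    have hindS : ∀ a ∈ S, ∀ b ∈ S, ¬ G.D.Adj a b := fun a ha b hb =>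
      hind a (Finset.mem_insert_of_mem ha) b (Finset.mem_insert_of_mem hb)
    have hkey := (ProbabilityTheory.Indep_iff _ _ _).1 (G.indep e)
    have ht1 : MeasurableSet[MeasurableSpace.comap (G.X e) ⊤] (G.X e ⁻¹' {true}) :=
      ⟨{true}, trivial, rfl⟩
    set M := ⨆ f ∈ {f : EdgeIdx n | f ≠ e ∧ ¬ G.D.Adj e f}, MeasurableSpace.comap (G.X f) ⊤
      with hM
    have ht2 : MeasurableSet[M] (⋂ f ∈ (S : Set (EdgeIdx n)), G.X f ⁻¹' {true}) := by
      refine MeasurableSet.biInter (Set.to_countable _) ?_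
      intro f hf
      have hfe : f ≠ e := fun h => he (h ▸ hf)
      have hfadj : ¬ G.D.Adj e f := hind e (Finset.mem_insert_self e S) f
        (Finset.mem_insert_of_mem hf)
      have hle : MeasurableSpace.comap (G.X f) ⊤ ≤ M := by
        rw [hM]
        exact le_iSup₂ (f := fun (f : EdgeIdx n) (_ : f ∈ {f : EdgeIdx n | f ≠ e ∧ ¬ G.D.Adj e f}) =>
          MeasurableSpace.comap (G.X f) ⊤) f ⟨hfe, hfadj⟩
      exact hle _ ⟨{true}, trivial, rfl⟩
    have heq : {ω | ∀ f ∈ insert e S, G.X f ω = true}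
        = (G.X e ⁻¹' {true}) ∩ (⋂ f ∈ (S : Set (EdgeIdx n)), G.X f ⁻¹' {true}) := by
      ext ω
      simp only [Set.mem_setOf_eq, Finset.mem_insert, Set.mem_inter_iff, Set.mem_iInter,
        Set.mem_preimage, Set.mem_singleton_iff, Finset.mem_coe]
      constructor
      · intro h; exact ⟨h e (Or.inl rfl), fun f hf => h f (Or.inr hf)⟩
      · rintro ⟨h1, h2⟩ f (rfl | hf)
        · exact h1
        · exact h2 f hf
    have hSet : {ω | ∀ f ∈ S, G.X f ω = true}
        = ⋂ f ∈ (S : Set (EdgeIdx n)), G.X f ⁻¹' {true} := by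
      ext ω; simp
    rw [heq, hkey _ _ ht1 ht2, ← hSet, ih hindS]
    have : G.μ (G.X e ⁻¹' {true}) = ENNReal.ofReal p := G.probX e
    rw [this, Finset.card_insert_of_notMem he, pow_succ]
    ring


/-- **Presence of many edges.** For any `d`-dependent random graph distribution and any set `F`
of `m ≥ 1` potential edges, the probability that every pair in `F` is present is at most
`p^⌈m/(d+1)⌉`. -/
theorem all_present_bound {n : ℕ} {p : ℝ} {d : ℕ} (G : DepRandomGraph n p d)
    (F : Finset (EdgeIdx n)) (m : ℕ) (hm : 1 ≤ m) (hF : F.card = m) :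
    G.μ {ω | ∀ e ∈ F, G.X e ω = true} ≤
      ENNReal.ofReal (p ^ ⌈(m : ℝ) / ((d : ℝ) + 1)⌉₊) := by
  classical
  obtain ⟨S, hSF, hSind, hScard⟩ := exists_indep_subset G.D G.degBound F
  set k := ⌈(m : ℝ) / ((d : ℝ) + 1)⌉₊ with hkdef
  have hk : k ≤ S.card := by
    rw [hkdef, Nat.ceil_le, div_le_iff₀ (by positivity)]
    have : (m : ℝ) ≤ ((d + 1) * S.card : ℕ) := by exact_mod_cast hF ▸ hScard
    push_cast at this ⊢
    linarith
  have hk1 : 1 ≤ k := by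
    rw [hkdef]
    refine Nat.one_le_ceil_iff.2 ?_
    have : (1 : ℝ) ≤ m := by exact_mod_cast hm
    positivity
  have hp1 : ENNReal.ofReal p ≤ 1 := by
    obtain ⟨e, he⟩ := Finset.card_pos.1 (by omega : 0 < F.card)
    rw [← G.probX e]
    exact prob_le_one
  have hmono : G.μ {ω | ∀ e ∈ F, G.X e ω = true} ≤ G.μ {ω | ∀ e ∈ S, G.X e ω = true} :=
    measure_mono (fun ω h e heS => h e (hSF heS))
  refine hmono.trans ?_
  rw [meas_all_eq G S hSind]
  calc (ENNReal.ofReal p) ^ S.card ≤ (ENNReal.ofReal p) ^ k :=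
        pow_le_pow_of_le_one zero_le hp1 hk
    _ ≤ ENNReal.ofReal (p ^ k) := by
        by_cases hp : 0 ≤ p
        · rw [ENNReal.ofReal_pow hp]
        · rw [ENNReal.ofReal_eq_zero.2 (le_of_lt (not_le.1 hp)),
            zero_pow (by omega : k ≠ 0)]
          exact zero_le
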